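/- Let u = x − y and v = ∇f(x) − ∇f(y) for a function f with m-strongly monotone and L-Lipschitz gradient (0 < m ≤ L). Then the quadratic form [u; v]ᵀ Q [u; v] ≥ 0 holds, where Q = [[−2mL, m+L],[m+L, −2]] ⊗ I_d. -/

import Mathlib

open RealInnerProductSpace
open Set

variable {E : Type*} [NormedAddCommGroup E] [InnerProductSpace ℝ E] [CompleteSpace E]

lemma lineDeriv_aux {h : E → ℝ} {G : E → E} (hg : ∀ z, HasGradientAt h (G z) z)
    (a b : E) (t : ℝ) :
    HasDerivAt (fun s : ℝ => h (a + s • (b - a))) ⟪G (a + t • (b - a)), b - a⟫ t := by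
  have hline : HasDerivAt (fun s : ℝ => a + s • (b - a)) (b - a) t :=
    by simpa using ((hasDerivAt_id t).smul_const (b - a)).const_add a
  have := (hg (a + t • (b - a))).hasFDerivAt.comp_hasDerivAt t hline
  simpa [InnerProductSpace.toDual_apply_apply, Function.comp_def] using this

lemma gradient_inner_const (c z : E) : HasGradientAt (fun w : E => ⟪c, w⟫) c z := by
  have hfun : (fun w : E => ⟪c, w⟫) = ⇑(InnerProductSpace.toDual ℝ E c) := by
    funext w; simp [InnerProductSpace.toDual_apply_apply]
  rw [HasGradientAt, HasGradientAtFilter, hfun]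
  exact (InnerProductSpace.toDual ℝ E c).hasFDerivAt

lemma first_order_lower {h : E → ℝ} {G : E → E} (hg : ∀ z, HasGradientAt h (G z) z)
    (hmono : ∀ p q, 0 ≤ ⟪G p - G q, p - q⟫) (a b : E) :
    h a + ⟪G a, b - a⟫ ≤ h b := by
  set φ : ℝ → ℝ := fun s => h (a + s • (b - a)) - s * ⟪G a, b - a⟫ with hφ
  have hd : ∀ t : ℝ, HasDerivAt φ (⟪G (a + t • (b - a)), b - a⟫ - ⟪G a, b - a⟫) t := by
    intro t
    simpa [hφ, Pi.sub_def] using (lineDeriv_aux hg a b t).sub ((hasDerivAt_id t).mul_const ⟪G a, b - a⟫)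
  have hmon : MonotoneOn φ (Icc (0:ℝ) 1) := by
    apply monotoneOn_of_deriv_nonneg (convex_Icc 0 1)
    · exact fun t _ => (hd t).continuousAt.continuousWithinAt
    · exact fun t _ => ((hd t).differentiableAt).differentiableWithinAt
    · intro t ht
      rw [interior_Icc, mem_Ioo] at ht
      rw [(hd t).deriv]
      have h1 : 0 ≤ ⟪G (a + t • (b - a)) - G a, (a + t • (b - a)) - a⟫ := hmono _ _
      have h2 : (a + t • (b - a)) - a = t • (b - a) := by abel
      rw [h2, real_inner_smul_right] at h1
      have := nonneg_of_mul_nonneg_right h1 ht.1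
      rw [inner_sub_left] at this
      linarith
  have h01 : φ 0 ≤ φ 1 := hmon (by simp) (by simp) zero_le_one
  simp only [hφ, zero_smul, add_zero, one_smul, zero_mul, sub_zero, one_mul] at h01
  have : a + (b - a) = b := by abel
  rw [this] at h01
  linarith

lemma descent_lemma {h : E → ℝ} {G : E → E} (hg : ∀ z, HasGradientAt h (G z) z)
    {K : ℝ} (hsm : ∀ p q, ⟪G p - G q, p - q⟫ ≤ K * ‖p - q‖ ^ 2) (a b : E) :
    h b ≤ h a + ⟪G a, b - a⟫ + K / 2 * ‖b - a‖ ^ 2 := by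
  set r : ℝ → ℝ := fun s => h (a + s • (b - a)) - s * ⟪G a, b - a⟫
      - K / 2 * ‖b - a‖ ^ 2 * s ^ 2 with hr
  have hd : ∀ t : ℝ, HasDerivAt r
      (⟪G (a + t • (b - a)), b - a⟫ - ⟪G a, b - a⟫ - K / 2 * ‖b - a‖ ^ 2 * (2 * t)) t := by
    intro t
    have h2 : HasDerivAt (fun s : ℝ => K / 2 * ‖b - a‖ ^ 2 * s ^ 2)
        (K / 2 * ‖b - a‖ ^ 2 * (2 * t)) t := by
      simpa using (hasDerivAt_pow 2 t).const_mul (K / 2 * ‖b - a‖ ^ 2)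
    simpa [hr, Pi.sub_def] using ((lineDeriv_aux hg a b t).sub ((hasDerivAt_id t).mul_const ⟪G a, b - a⟫)).sub h2
  have hant : AntitoneOn r (Icc (0:ℝ) 1) := by
    apply antitoneOn_of_deriv_nonpos (convex_Icc 0 1)
    · exact fun t _ => (hd t).continuousAt.continuousWithinAt
    · exact fun t _ => ((hd t).differentiableAt).differentiableWithinAt
    · intro t ht
      rw [interior_Icc, mem_Ioo] at ht
      rw [(hd t).deriv]
      have h1 : ⟪G (a + t • (b - a)) - G a, (a + t • (b - a)) - a⟫
          ≤ K * ‖(a + t • (b - a)) - a‖ ^ 2 := hsm _ _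
      have h2 : (a + t • (b - a)) - a = t • (b - a) := by abel
      rw [h2, real_inner_smul_right, norm_smul, Real.norm_eq_abs,
        abs_of_pos ht.1, mul_pow] at h1
      have h3 : ⟪G (a + t • (b - a)) - G a, b - a⟫ ≤ K * (t * ‖b - a‖ ^ 2) := by
        have := (mul_le_mul_iff_right₀ ht.1).mp (by linarith [h1] : t * ⟪G (a + t • (b - a)) - G a, b - a⟫ ≤ t * (K * (t * ‖b - a‖ ^ 2)))
        exact this
      rw [inner_sub_left] at h3
      nlinarith [h3]
  have h01 : r 1 ≤ r 0 := hant (by simp) (by simp) zero_le_one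
  simp only [hr, zero_smul, add_zero, one_smul, zero_mul, sub_zero, one_mul, one_pow,
    mul_one, zero_pow, mul_zero] at h01
  have : a + (b - a) = b := by abel
  rw [this] at h01
  linarith

lemma coco_key {h : E → ℝ} {G : E → E} (hg : ∀ z, HasGradientAt h (G z) z)
    (hmono : ∀ p q, 0 ≤ ⟪G p - G q, p - q⟫)
    {K : ℝ} (hK : 0 < K) (hsm : ∀ p q, ⟪G p - G q, p - q⟫ ≤ K * ‖p - q‖ ^ 2)
    (p q : E) :
    h p - ⟪G p, p⟫ + (2 * K)⁻¹ * ‖G q - G p‖ ^ 2 ≤ h q - ⟪G p, q⟫ := by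
  set H : E → ℝ := fun z => h z - ⟪G p, z⟫ with hH
  set GH : E → E := fun z => G z - G p with hGH
  have hg' : ∀ z, HasGradientAt H (GH z) z := by
    intro z
    have := ((hg z).hasFDerivAt.sub (gradient_inner_const (G p) z).hasFDerivAt).hasGradientAt
    simpa [hH, hGH, Pi.sub_def] using this
  have hsub : ∀ z w : E, GH z - GH w = G z - G w := by
    intro z w; simp [hGH]
  have hmono' : ∀ z w, 0 ≤ ⟪GH z - GH w, z - w⟫ := by
    intro z w; rw [hsub]; exact hmono z w
  have hsm' : ∀ z w, ⟪GH z - GH w, z - w⟫ ≤ K * ‖z - w‖ ^ 2 := by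
    intro z w; rw [hsub]; exact hsm z w
  set b : E := q - K⁻¹ • (G q - G p) with hb
  have hlow : H p ≤ H b := by
    have := first_order_lower hg' hmono' p b
    simpa [hGH, inner_zero_left] using this
  have hdesc : H b ≤ H q + ⟪GH q, b - q⟫ + K / 2 * ‖b - q‖ ^ 2 :=
    descent_lemma hg' hsm' q b
  have hbq : b - q = -(K⁻¹ • (G q - G p)) := by rw [hb]; abel
  have e1 : ⟪GH q, b - q⟫ = -(K⁻¹ * ‖G q - G p‖ ^ 2) := by
    rw [hbq, inner_neg_right, real_inner_smul_right, real_inner_self_eq_norm_sq, hGH]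
  have e2 : ‖b - q‖ ^ 2 = K⁻¹ ^ 2 * ‖G q - G p‖ ^ 2 := by
    rw [hbq, norm_neg, norm_smul, Real.norm_eq_abs, abs_of_pos (inv_pos.2 hK), mul_pow]
  have key : H p ≤ H q - (2 * K)⁻¹ * ‖G q - G p‖ ^ 2 := by
    have hKne : K ≠ 0 := ne_of_gt hK
    have : -(K⁻¹ * ‖G q - G p‖ ^ 2) + K / 2 * (K⁻¹ ^ 2 * ‖G q - G p‖ ^ 2)
        = -((2 * K)⁻¹ * ‖G q - G p‖ ^ 2) := by
      field_simp
      ring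
    calc H p ≤ H q + ⟪GH q, b - q⟫ + K / 2 * ‖b - q‖ ^ 2 := hlow.trans hdesc
      _ = H q - (2 * K)⁻¹ * ‖G q - G p‖ ^ 2 := by rw [e1, e2]; linarith [this]
  simp only [hH] at key
  linarith

lemma cocoercive {h : E → ℝ} {G : E → E} (hg : ∀ z, HasGradientAt h (G z) z)
    (hmono : ∀ p q, 0 ≤ ⟪G p - G q, p - q⟫)
    {K : ℝ} (hK : 0 < K) (hsm : ∀ p q, ⟪G p - G q, p - q⟫ ≤ K * ‖p - q‖ ^ 2)
    (x y : E) : ‖G x - G y‖ ^ 2 ≤ K * ⟪G x - G y, x - y⟫ := by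
  have h1 := coco_key hg hmono hK hsm x y
  have h2 := coco_key hg hmono hK hsm y x
  have hnorm : ‖G x - G y‖ = ‖G y - G x‖ := norm_sub_rev _ _
  have hinner : ⟪G x - G y, x - y⟫ = ⟪G x, x⟫ - ⟪G x, y⟫ - ⟪G y, x⟫ + ⟪G y, y⟫ := by
    rw [inner_sub_left, inner_sub_right, inner_sub_right]; ring
  have hKpos : (0:ℝ) < 2 * K := by linarith
  rw [hnorm] at h2 ⊢
  have : 2 * ((2 * K)⁻¹ * ‖G y - G x‖ ^ 2) ≤ ⟪G x - G y, x - y⟫ := by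
    rw [hinner]; linarith
  rw [show (2:ℝ) * ((2 * K)⁻¹ * ‖G y - G x‖ ^ 2) = K⁻¹ * ‖G y - G x‖ ^ 2 by
    field_simp] at this
  calc ‖G y - G x‖ ^ 2 = K * (K⁻¹ * ‖G y - G x‖ ^ 2) := by field_simp
    _ ≤ K * ⟪G x - G y, x - y⟫ := by
        exact mul_le_mul_of_nonneg_left this (le_of_lt hK)

lemma grad_half_norm_sq (m : ℝ) {E : Type*} [NormedAddCommGroup E] [InnerProductSpace ℝ E]
    [CompleteSpace E] (z : E) :
    HasGradientAt (fun w : E => m / 2 * ‖w‖ ^ 2) (m • z) z := by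
  have h1 := ((hasFDerivAt_id z).inner ℝ (hasFDerivAt_id z)).const_mul (m / 2)
  have h2 : HasFDerivAt (fun w : E => m / 2 * ‖w‖ ^ 2)
      ((m / 2) • ((fderivInnerCLM ℝ ((z, z) : E × E)).comp
        ((ContinuousLinearMap.id ℝ E).prod (ContinuousLinearMap.id ℝ E)))) z := by
    simpa [real_inner_self_eq_norm_sq] using h1
  have h3 : InnerProductSpace.toDual ℝ E (m • z)
      = (m / 2) • ((fderivInnerCLM ℝ ((z, z) : E × E)).comp
        ((ContinuousLinearMap.id ℝ E).prod (ContinuousLinearMap.id ℝ E))) := by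
    ext v
    simp [InnerProductSpace.toDual_apply_apply, real_inner_smul_left, real_inner_comm z v]
    ring
  rw [HasGradientAt, HasGradientAtFilter, h3]
  exact h2

theorem quadratic_form_Qf_nonneg (d : ℕ) (f : EuclideanSpace ℝ (Fin d) → ℝ)
    (g : EuclideanSpace ℝ (Fin d) → EuclideanSpace ℝ (Fin d)) (m L : ℝ)
    (hm : 0 < m) (hmL : m ≤ L)
    (hgrad : ∀ x, HasGradientAt f (g x) x)
    (hmono : ∀ x y, m * ‖x - y‖ ^ 2 ≤ ⟪x - y, g x - g y⟫)
    (hlip : ∀ x y, ‖g x - g y‖ ≤ L * ‖x - y‖) :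
    ∀ x y, 0 ≤ -2 * m * L * ‖x - y‖ ^ 2 + 2 * (m + L) * ⟪x - y, g x - g y⟫
      - 2 * ‖g x - g y‖ ^ 2 := by
  intro x y
  rcases eq_or_lt_of_le hmL with hEq | hlt
  · -- m = L
    subst hEq
    have h1 := hmono x y
    have h2 := hlip x y
    have h3 : ‖g x - g y‖ ^ 2 ≤ (m * ‖x - y‖) ^ 2 :=
      pow_le_pow_left₀ (norm_nonneg _) h2 2
    nlinarith [norm_nonneg (x - y), norm_nonneg (g x - g y)]
  · set G : EuclideanSpace ℝ (Fin d) → EuclideanSpace ℝ (Fin d) :=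
      fun z => g z - m • z with hG
    have hg' : ∀ z, HasGradientAt (fun w => f w - m / 2 * ‖w‖ ^ 2) (G z) z := by
      intro z
      have := ((hgrad z).hasFDerivAt.sub (grad_half_norm_sq m z).hasFDerivAt).hasGradientAt
      simpa [hG, Pi.sub_def] using this
    have hGsub : ∀ p q, G p - G q = (g p - g q) - m • (p - q) := by
      intro p q; simp [hG, smul_sub]; abel
    have hinner : ∀ p q, ⟪G p - G q, p - q⟫ = ⟪p - q, g p - g q⟫ - m * ‖p - q‖ ^ 2 := by
      intro p q
      rw [hGsub, inner_sub_left, real_inner_smul_left, real_inner_self_eq_norm_sq,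
        real_inner_comm]
    have hmono' : ∀ p q, 0 ≤ ⟪G p - G q, p - q⟫ := by
      intro p q; rw [hinner]; linarith [hmono p q]
    have hsm' : ∀ p q, ⟪G p - G q, p - q⟫ ≤ (L - m) * ‖p - q‖ ^ 2 := by
      intro p q
      rw [hinner]
      have h1 : ⟪p - q, g p - g q⟫ ≤ ‖p - q‖ * ‖g p - g q‖ := real_inner_le_norm _ _
      have h2 : ‖p - q‖ * ‖g p - g q‖ ≤ ‖p - q‖ * (L * ‖p - q‖) :=
        mul_le_mul_of_nonneg_left (hlip p q) (norm_nonneg _)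
      nlinarith [norm_nonneg (p - q)]
    have hK : (0:ℝ) < L - m := by linarith
    have coco := cocoercive hg' hmono' hK hsm' x y
    have e1 : ⟪G x - G y, x - y⟫ = ⟪x - y, g x - g y⟫ - m * ‖x - y‖ ^ 2 := hinner x y
    have e2 : ‖G x - G y‖ ^ 2 = ‖g x - g y‖ ^ 2 - 2 * m * ⟪x - y, g x - g y⟫
        + m ^ 2 * ‖x - y‖ ^ 2 := by
      rw [hGsub]
      rw [@norm_sub_sq_real]
      rw [real_inner_smul_right, norm_smul, Real.norm_eq_abs, mul_pow, sq_abs,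
        real_inner_comm]
      ring
    rw [e1, e2] at coco
    linarith
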